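/- arXiv:math/0611528 — 3 statements merged into one kernel-verified Lean document; each statement's English description precedes it below -/
import Mathlib

section
/- (Auxiliary identity in the flatness proof.) Let (T_0,…,T_{n−1}) be an extended D-connection. For j = 0,…,n−1 define T'_j: R^2(F) → R^{j+2}(F) by T'_j(m_1 m_2) = Σ_{i=0}^{j} T_i(m_1)T_{j−i}(m_2). Then T'_j is well defined on R^2(F) (i.e., Σ_i T_i(am_1)T_{j−i}(m_2) = Σ_i T_i(m_1)T_{j−i}(am_2) for all a ∈ A), and satisfies T'_j(aω) = a T'_j(ω) + Σ_{i=1}^{j} (1/(j+1−i)) T_{j−i}(D(a)) T'_{i−1}(ω) for all a ∈ A, ω ∈ R^2(F). -/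
open scoped TensorProduct

noncomputable section

variable (A : Type) [CommRing A]
variable (F : Type) [AddCommGroup F] [Module A F]

/-- `n`-fold tensor power `T^n(F)`. -/
abbrev TPow (n : ℕ) := PiTensorProduct A (fun _ : Fin n => F)

/-- The submodule of symmetry relations. -/
def symRel (n : ℕ) : Submodule A (TPow A F n) :=
  Submodule.span A
    {x | ∃ (m : Fin n → F) (e : Equiv.Perm (Fin n)),
      x = PiTensorProduct.tprod A m - PiTensorProduct.tprod A (m ∘ e)}

/-- Symmetric power `S^n(F)`. -/
abbrev SymPow (n : ℕ) := TPow A F n ⧸ symRel A F n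

/-- Class of the word `m₀ ⋯ m_{n-1}` in `S^n(F)`. -/
def mkS {n : ℕ} (m : Fin n → F) : SymPow A F n :=
  Submodule.Quotient.mk (PiTensorProduct.tprod A m)

/-- Class of a list of elements of `F` in the symmetric power. -/
def mkSL (l : List F) : SymPow A F l.length := mkS A F l.get

/-- `RPow A F n` is `R^{n+1}(F) = S^n(F) ⊗_A F`. -/
abbrev RPow (n : ℕ) := SymPow A F n ⊗[A] F

/-- Class of the word `m₀ ⋯ m_n` in `R^{n+1}(F) = S^n(F) ⊗ F`. -/
def mkR {n : ℕ} (m : Fin (n + 1) → F) : RPow A F n :=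
  mkS A F (fun i : Fin n => m i.castSucc) ⊗ₜ[A] m (Fin.last n)

/-- The `i`-th "rotation" of the word `m` appearing in the definition of the
switch operator: `m_n m_{n-1} ⋯ m_{n-i+1} m_0 m_1 ⋯ m_{n-i}` (0-indexed). -/
def rot {n : ℕ} (m : Fin (n + 1) → F) (i : ℕ) : Fin (n + 1) → F := fun j =>
  if j.val < i then m ⟨n - j.val, by have := j.isLt; omega⟩
  else m ⟨j.val - i, by have := j.isLt; omega⟩

/-- `σ` is the switch operator on `R^{n+1}(F)`:
`σ(m_0⋯m_n) = ∑_{i=1}^{n} m_n m_{n-1}⋯m_{n-i+1} m_0 m_1 ⋯ m_{n-i}`. -/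
def IsSwitch (n : ℕ) (σ : RPow A F n →ₗ[A] RPow A F n) : Prop :=
  ∀ m : Fin (n + 1) → F,
    σ (mkR A F m) = ∑ i ∈ Finset.Icc 1 n, mkR A F (rot F m i)

/-- `K^{n+1}(F) = σ*(R^{n+1}(F))`, described by its generators `σ*(m_0⋯m_n)`. -/
def KSub (n : ℕ) : Submodule A (RPow A F n) :=
  Submodule.span A
    {x | ∃ m : Fin (n + 1) → F,
      x = mkR A F m + ∑ i ∈ Finset.Icc 1 n, mkR A F (rot F m i)}

/-- `K²(F) ⊆ T²(F) = F ⊗ F`: the kernel of `T²(F) → Λ²(F)`, i.e. the image of `1 + σ`. -/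
def K2Sub : Submodule A (F ⊗[A] F) :=
  Submodule.span A {x | ∃ u v : F, x = u ⊗ₜ[A] v + v ⊗ₜ[A] u}

/-- The word `m₀ ⋯ m_{p-1} u m'₀ ⋯ m'_{q-1}`. -/
def joinWord {p q : ℕ} (m : Fin p → F) (u : F) (m' : Fin q → F) :
    Fin (p + q + 1) → F := fun j =>
  if h : j.val < p then m ⟨j.val, h⟩
  else if _h2 : j.val < p + 1 then u
  else m' ⟨j.val - (p + 1), by have := j.isLt; omega⟩

/-- The concatenated word `m₀ ⋯ m_{p-1} m'₀ ⋯ m'_{q-1}`. -/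
def appendWord {p q : ℕ} (m : Fin p → F) (m' : Fin q → F) : Fin (p + q) → F := fun j =>
  if h : j.val < p then m ⟨j.val, h⟩
  else m' ⟨j.val - p, by have := j.isLt; omega⟩

/-- `mul` is the multiplication `R^{p+1}(F) × R^{q+1}(F) → R^{p+q+2}(F)` of the graded
algebra `R(F)`, recorded with values in `∏ₖ R^{k+1}(F)`:
`(s ⊗ u)·(s' ⊗ v) = (s u s') ⊗ v`. -/
def IsMulR (mul : ∀ p q, RPow A F p →ₗ[A] RPow A F q →ₗ[A] ∀ k, RPow A F k) : Prop :=
  ∀ (p q : ℕ) (m : Fin p → F) (u : F) (m' : Fin q → F) (v : F),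
    mul p q (mkS A F m ⊗ₜ[A] u) (mkS A F m' ⊗ₜ[A] v)
      = Pi.single (p + q + 1) (mkS A F (joinWord F m u m') ⊗ₜ[A] v)

/-- `mul` is the multiplication `S^p(F) × S^q(F) → S^{p+q}(F)` of the symmetric algebra,
recorded with values in `∏ₖ S^k(F)`. -/
def IsMulS (mul : ∀ p q, SymPow A F p →ₗ[A] SymPow A F q →ₗ[A] ∀ k, SymPow A F k) : Prop :=
  ∀ (p q : ℕ) (m : Fin p → F) (m' : Fin q → F),
    mul p q (mkS A F m) (mkS A F m') = Pi.single (p + q) (mkS A F (appendWord F m m'))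

/-- `π` is the family of natural maps `R^{n+1}(F) = S^n(F) ⊗ F → S^{n+1}(F)`. -/
def IsPi (π : ∀ n, RPow A F n →ₗ[A] SymPow A F (n + 1)) : Prop :=
  ∀ (n : ℕ) (m : Fin n → F) (v : F),
    π n (mkS A F m ⊗ₜ[A] v) = mkS A F (Fin.snoc m v)

/-- `T = (T₀, T₁, …)` is a (full) extended `D`-connection:  `T₀ = id_F` (under
`F ≅ R¹(F)`), and `T_i(am) = a T_i(m) + ∑_{j=1}^i (1/j) T_{j-1}(D a) T_{i-j}(m)`. -/
def IsExtConn [Algebra ℚ A] (D : A → F)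
    (mul : ∀ p q, RPow A F p →ₗ[A] RPow A F q →ₗ[A] ∀ k, RPow A F k)
    (T : ∀ i, F →+ RPow A F i) : Prop :=
  (∀ m : F, T 0 m = mkS A F (fun i : Fin 0 => i.elim0) ⊗ₜ[A] m) ∧
  ∀ (i : ℕ), 1 ≤ i → ∀ (a : A) (m : F),
    Pi.single i (T i (a • m))
      = Pi.single i (a • T i m)
        + ∑ j ∈ Finset.Icc 1 i,
            algebraMap ℚ A (1 / (j : ℚ)) •
              mul (j - 1) (i - j) (T (j - 1) (D a)) (T (i - j) m)

/-- `T = (T₀, …, T_N)` is an extended `D`-connection up to order `N`. -/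
def IsExtConnTo [Algebra ℚ A] (D : A → F)
    (mul : ∀ p q, RPow A F p →ₗ[A] RPow A F q →ₗ[A] ∀ k, RPow A F k)
    (N : ℕ) (T : ∀ i, F →+ RPow A F i) : Prop :=
  (∀ m : F, T 0 m = mkS A F (fun i : Fin 0 => i.elim0) ⊗ₜ[A] m) ∧
  ∀ (i : ℕ), 1 ≤ i → i ≤ N → ∀ (a : A) (m : F),
    Pi.single i (T i (a • m))
      = Pi.single i (a • T i m)
        + ∑ j ∈ Finset.Icc 1 i,
            algebraMap ℚ A (1 / (j : ℚ)) •
              mul (j - 1) (i - j) (T (j - 1) (D a)) (T (i - j) m)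

/-- The wedge map `F ⊗_A F →  Λ(F)`, `u ⊗ v ↦ u ∧ v`; an element of `F ⊗ F` maps to
zero in `Λ²(F)` iff its image under this map is zero. -/
def wedgeMap : F ⊗[A] F →ₗ[A] ExteriorAlgebra A F :=
  TensorProduct.lift
    ((LinearMap.mul A (ExteriorAlgebra A F)).compl₁₂ (ExteriorAlgebra.ι A) (ExteriorAlgebra.ι A))


section Aux

variable {A F}

lemma mkS_perm {n : ℕ} (m : Fin n → F) (e : Equiv.Perm (Fin n)) :
    mkS A F (m ∘ e) = mkS A F m := by
  rw [mkS, mkS, eq_comm, Submodule.Quotient.eq]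
  exact Submodule.subset_span ⟨m, e, rfl⟩

lemma rpow_span (p : ℕ) :
    Submodule.span A {x : RPow A F p | ∃ m v, x = mkS A F m ⊗ₜ[A] v} = ⊤ := by
  rw [eq_top_iff]
  rintro x -
  induction x using TensorProduct.induction_on with
  | zero => exact Submodule.zero_mem _
  | add x y hx hy => exact Submodule.add_mem _ hx hy
  | tmul s v =>
      obtain ⟨t, rfl⟩ := Submodule.Quotient.mk_surjective _ s
      have ht : t ∈ (⊤ : Submodule A (TPow A F p)) := trivial
      rw [← PiTensorProduct.span_tprod_eq_top] at ht
      induction ht using Submodule.span_induction with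
      | mem t h => obtain ⟨m, rfl⟩ := h; exact Submodule.subset_span ⟨m, v, rfl⟩
      | zero =>
          have : (Submodule.Quotient.mk (0 : TPow A F p) : SymPow A F p) ⊗ₜ[A] v = 0 := by
            rw [Submodule.Quotient.mk_zero, TensorProduct.zero_tmul]
          rw [this]; exact Submodule.zero_mem _
      | add t t' _ _ h h' =>
          rw [Submodule.Quotient.mk_add, TensorProduct.add_tmul]
          exact Submodule.add_mem _ h h'
      | smul a t _ h =>
          rw [Submodule.Quotient.mk_smul, ← TensorProduct.smul_tmul']
          exact Submodule.smul_mem _ _ h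

variable {mul : ∀ p q, RPow A F p →ₗ[A] RPow A F q →ₗ[A] ∀ k, RPow A F k}

lemma mul_mem_single (hmul : IsMulR A F mul) (p q : ℕ) (x : RPow A F p) (y : RPow A F q) :
    mul p q x y ∈ LinearMap.range (LinearMap.single A (fun k => RPow A F k) (p + q + 1)) := by
  have hx : x ∈ (⊤ : Submodule A _) := trivial
  rw [← rpow_span p] at hx
  induction hx using Submodule.span_induction with
  | mem x h =>
      obtain ⟨m, u, rfl⟩ := h
      have hy : y ∈ (⊤ : Submodule A _) := trivial
      rw [← rpow_span q] at hy
      induction hy using Submodule.span_induction with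
      | mem y h' =>
          obtain ⟨m', v, rfl⟩ := h'
          exact ⟨_, by rw [hmul p q m u m' v]; rfl⟩
      | zero => rw [map_zero]; exact Submodule.zero_mem _
      | add y y' _ _ h h' => rw [map_add]; exact Submodule.add_mem _ h h'
      | smul a y _ h => rw [map_smul]; exact Submodule.smul_mem _ _ h
  | zero => rw [map_zero, LinearMap.zero_apply]; exact Submodule.zero_mem _
  | add x x' _ _ h h' => rw [map_add, LinearMap.add_apply]; exact Submodule.add_mem _ h h'
  | smul a x _ h => rw [map_smul, LinearMap.smul_apply]; exact Submodule.smul_mem _ _ h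

/-- Congruence for `Pi.single` images of words, up to reindexing by a permutation. -/
lemma single_word_congr {N₁ N₂ : ℕ} (h : N₁ = N₂) (m₁ : Fin N₁ → F) (m₂ : Fin N₂ → F)
    (w : F) (e : Equiv.Perm (Fin N₂)) (hm : ∀ j, m₂ j = m₁ (Fin.cast h.symm (e j))) :
    (Pi.single N₁ (mkS A F m₁ ⊗ₜ[A] w) : ∀ k, RPow A F k)
      = Pi.single N₂ (mkS A F m₂ ⊗ₜ[A] w) := by
  subst h
  have hm₂ : m₂ = m₁ ∘ e := funext fun j => hm j
  rw [hm₂, mkS_perm]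

/-- Block-swap permutation exchanging the first `q+1` letters with the next `p+1`. -/
def blockSwap (p q r : ℕ) : Equiv.Perm (Fin (q + (p + r + 1) + 1)) where
  toFun j := ⟨if j.val < q + 1 then j.val + (p + 1)
      else if j.val < p + q + 2 then j.val - (q + 1) else j.val, by
    have := j.isLt; split_ifs <;> omega⟩
  invFun j := ⟨if j.val < p + 1 then j.val + (q + 1)
      else if j.val < p + q + 2 then j.val - (p + 1) else j.val, by
    have := j.isLt; split_ifs <;> omega⟩
  left_inv j := by
    have := j.isLt
    apply Fin.ext
    simp only
    split_ifs <;> omega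
  right_inv j := by
    have := j.isLt
    apply Fin.ext
    simp only
    split_ifs <;> omega

lemma mul_assoc3 (hmul : IsMulR A F mul) (p q r N M : ℕ)
    (hN : N = p + q + 1) (hM : M = q + r + 1)
    (x : RPow A F p) (y : RPow A F q) (z : RPow A F r) :
    mul N r ((mul p q x y) N) z = mul p M x ((mul q r y z) M) := by
  subst hN hM
  have hx : x ∈ (⊤ : Submodule A _) := trivial
  rw [← rpow_span p] at hx
  induction hx using Submodule.span_induction with
  | zero => simp
  | add x x' _ _ h h' => simp only [map_add, LinearMap.add_apply, Pi.add_apply, h, h']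
  | smul a x _ h => simp only [map_smul, LinearMap.smul_apply, Pi.smul_apply, h]
  | mem x h =>
    obtain ⟨m, u, rfl⟩ := h
    have hy : y ∈ (⊤ : Submodule A _) := trivial
    rw [← rpow_span q] at hy
    induction hy using Submodule.span_induction with
    | zero => simp
    | add y y' _ _ h h' => simp only [map_add, LinearMap.add_apply, Pi.add_apply, h, h']
    | smul a y _ h => simp only [map_smul, LinearMap.smul_apply, Pi.smul_apply, h]
    | mem y h' =>
      obtain ⟨m', v, rfl⟩ := h'
      have hz : z ∈ (⊤ : Submodule A _) := trivial
      rw [← rpow_span r] at hz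
      induction hz using Submodule.span_induction with
      | zero => simp
      | add z z' _ _ h h' => simp only [map_add, Pi.add_apply, LinearMap.add_apply, h, h']
      | smul a z _ h => simp only [map_smul, Pi.smul_apply, LinearMap.smul_apply, h]
      | mem z h'' =>
        obtain ⟨m'', w, rfl⟩ := h''
        rw [hmul p q m u m' v, hmul q r m' v m'' w,
          Pi.single_eq_same, Pi.single_eq_same,
          hmul (p + q + 1) r _ v m'' w, hmul p (q + r + 1) m u _ w]
        refine single_word_congr (by omega) _ _ w (Equiv.refl _) fun j => ?_
        simp only [Equiv.refl_apply, joinWord, Fin.coe_cast]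
        split_ifs <;> first
          | rfl
          | omega
          | (apply congrArg; apply Fin.ext; simp only; omega)
          | grind

lemma mul_comm3 (hmul : IsMulR A F mul) (p q r N M : ℕ)
    (hN : N = p + q + 1) (hM : M = p + r + 1)
    (x : RPow A F p) (y : RPow A F q) (z : RPow A F r) :
    mul N r ((mul p q x y) N) z = mul q M y ((mul p r x z) M) := by
  subst hN hM
  have hx : x ∈ (⊤ : Submodule A _) := trivial
  rw [← rpow_span p] at hx
  induction hx using Submodule.span_induction with
  | zero => simp
  | add x x' _ _ h h' => simp only [map_add, LinearMap.add_apply, Pi.add_apply, h, h']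
  | smul a x _ h => simp only [map_smul, LinearMap.smul_apply, Pi.smul_apply, h]
  | mem x h =>
    obtain ⟨m, u, rfl⟩ := h
    have hy : y ∈ (⊤ : Submodule A _) := trivial
    rw [← rpow_span q] at hy
    induction hy using Submodule.span_induction with
    | zero => simp
    | add y y' _ _ h h' => simp only [map_add, LinearMap.add_apply, Pi.add_apply, h, h']
    | smul a y _ h => simp only [map_smul, LinearMap.smul_apply, Pi.smul_apply, h]
    | mem y h' =>
      obtain ⟨m', v, rfl⟩ := h'
      have hz : z ∈ (⊤ : Submodule A _) := trivial
      rw [← rpow_span r] at hz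
      induction hz using Submodule.span_induction with
      | zero => simp
      | add z z' _ _ h h' => simp only [map_add, Pi.add_apply, LinearMap.add_apply, h, h']
      | smul a z _ h => simp only [map_smul, Pi.smul_apply, LinearMap.smul_apply, h]
      | mem z h'' =>
        obtain ⟨m'', w, rfl⟩ := h''
        rw [hmul p q m u m' v, hmul p r m u m'' w,
          Pi.single_eq_same, Pi.single_eq_same,
          hmul (p + q + 1) r _ v m'' w, hmul q (p + r + 1) m' v _ w]
        refine single_word_congr (by omega) _ _ w (blockSwap p q r) fun j => ?_
        have hj := j.isLt
        simp only [blockSwap, Equiv.coe_fn_mk, joinWord, Fin.coe_cast]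
        split_ifs <;> first
          | rfl
          | omega
          | (apply congrArg; apply Fin.ext; simp only; omega)

lemma mul_evall {r N N' : ℕ} (h : N = N') (w : ∀ k, RPow A F k) (z : RPow A F r) :
    mul N r (w N) z = mul N' r (w N') z := by subst h; rfl

lemma mul_evalr {p N N' : ℕ} (h : N = N') (x : RPow A F p) (w : ∀ k, RPow A F k) :
    mul p N x (w N) = mul p N' x (w N') := by subst h; rfl

lemma sum_tri₁ {V : Type*} [AddCommMonoid V] (j : ℕ) (E : ℕ → ℕ → ℕ → V) :
    ∑ i ∈ Finset.range (j + 1), ∑ k ∈ Finset.Icc 1 i, E k (i - k) (j - i)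
      = ∑ i ∈ Finset.range (j + 1), ∑ k ∈ Finset.Icc 1 (j - i), E k i (j - i - k) := by
  rw [Finset.sum_sigma', Finset.sum_sigma']
  refine Finset.sum_bij' (fun x _ => ⟨x.1 - x.2, x.2⟩) (fun x _ => ⟨x.1 + x.2, x.2⟩)
    ?_ ?_ ?_ ?_ ?_ <;>
    rintro ⟨i, k⟩ h <;>
    simp only [Finset.mem_sigma, Finset.mem_range, Finset.mem_Icc] at h ⊢
  · omega
  · omega
  · apply Sigma.ext <;> simp <;> omega
  · apply Sigma.ext <;> simp <;> omega
  · rw [show j - (i - k) - k = j - i by omega]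

lemma sum_tri₂ {V : Type*} [AddCommMonoid V] (j : ℕ) (E : ℕ → ℕ → ℕ → V) :
    ∑ i ∈ Finset.range (j + 1), ∑ k ∈ Finset.Icc 1 i, E k (i - k) (j - i)
      = ∑ i ∈ Finset.range j, ∑ p ∈ Finset.range (i + 1), E (j - i) p (i - p) := by
  rw [Finset.sum_sigma', Finset.sum_sigma']
  refine Finset.sum_bij' (fun x _ => ⟨j - x.2, x.1 - x.2⟩) (fun x _ => ⟨x.2 + (j - x.1), j - x.1⟩)
    ?_ ?_ ?_ ?_ ?_ <;>
    rintro ⟨i, k⟩ h <;>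
    simp only [Finset.mem_sigma, Finset.mem_range, Finset.mem_Icc] at h ⊢
  · omega
  · omega
  · apply Sigma.ext <;> simp <;> omega
  · apply Sigma.ext <;> simp <;> omega
  · rw [show j - (j - k) = k by omega, show j - k - (i - k) = j - i by omega]

end Aux

/-- The bi-additive map `(m₁, m₂) ↦ ∑ᵢ Tᵢ(m₁)·T_{j-i}(m₂)`. -/
def PhiMap (mul : ∀ p q, RPow A F p →ₗ[A] RPow A F q →ₗ[A] ∀ k, RPow A F k)
    (T : ∀ i, F →+ RPow A F i) (j : ℕ) : F →+ F →+ (∀ k, RPow A F k) :=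
  @AddMonoidHom.mk' _ _ (@AddMonoidHom.instAddCommGroup F ((k : ℕ) → RPow A F k) _ _).toAddGroup _
    (fun m₁ => AddMonoidHom.mk'
      (fun m₂ => ∑ i ∈ Finset.range (j + 1), mul i (j - i) (T i m₁) (T (j - i) m₂))
      (fun a b => by simp [map_add, Finset.sum_add_distrib]))
    (fun a b => by
      ext k
      simp [map_add, LinearMap.add_apply, Finset.sum_add_distrib])

lemma PhiMap_apply (mul : ∀ p q, RPow A F p →ₗ[A] RPow A F q →ₗ[A] ∀ k, RPow A F k)
    (T : ∀ i, F →+ RPow A F i) (j : ℕ) (m₁ m₂ : F) :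
    PhiMap A F mul T j m₁ m₂
      = ∑ i ∈ Finset.range (j + 1), mul i (j - i) (T i m₁) (T (j - i) m₂) := rfl

/-- auxiliary identity in the flatness proof.  Given an extended
`D`-connection `(T₀, …, T_{n-1})`, the maps `T'_j(m₁ m₂) = ∑_{i=0}^j T_i(m₁) T_{j-i}(m₂)`
are well defined on `R²(F) = F ⊗ F` and satisfy
`T'_j(aω) = a T'_j(ω) + ∑_{i=1}^j (1/(j+1-i)) T_{j-i}(D a) T'_{i-1}(ω)`. -/
theorem Tprime_wellDefined [Algebra ℚ A]
    (B : Type) [CommRing B] [Algebra B A] [Module B F] [IsScalarTower B A F]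
    (D : Derivation B A F)
    (mul : ∀ p q, RPow A F p →ₗ[A] RPow A F q →ₗ[A] ∀ k, RPow A F k)
    (hmul : IsMulR A F mul)
    (n : ℕ)
    (T : ∀ i, F →+ RPow A F i)
    (hT : IsExtConnTo A F (⇑D) mul (n - 1) T) :
    (∀ j ≤ n - 1, ∀ (a : A) (m₁ m₂ : F),
      ∑ i ∈ Finset.range (j + 1), mul i (j - i) (T i (a • m₁)) (T (j - i) m₂)
        = ∑ i ∈ Finset.range (j + 1), mul i (j - i) (T i m₁) (T (j - i) (a • m₂)))
    ∧ ∃ T' : ∀ j, F ⊗[A] F →+ RPow A F (j + 1),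
        (∀ j ≤ n - 1, ∀ m₁ m₂ : F,
          Pi.single (j + 1) (T' j (m₁ ⊗ₜ[A] m₂))
            = ∑ i ∈ Finset.range (j + 1), mul i (j - i) (T i m₁) (T (j - i) m₂))
        ∧ ∀ j ≤ n - 1, ∀ (a : A) (ω : F ⊗[A] F),
            Pi.single (j + 1) (T' j (a • ω))
              = Pi.single (j + 1) (a • T' j ω)
                + ∑ i ∈ Finset.range j,
                    algebraMap ℚ A (1 / ((j : ℚ) - (i : ℚ))) •
                      mul (j - (i + 1)) (i + 1) (T (j - (i + 1)) (D a)) (T' i ω) := by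
  classical
  obtain ⟨hT0, hTi⟩ := hT
  -- Leibniz rule, including the trivial case `i = 0`
  have L1 : ∀ i ≤ n - 1, ∀ (a : A) (m : F),
      (Pi.single i (T i (a • m)) : ∀ k, RPow A F k)
        = Pi.single i (a • T i m)
          + ∑ k ∈ Finset.Icc 1 i,
              algebraMap ℚ A (1 / (k : ℚ)) •
                mul (k - 1) (i - k) (T (k - 1) (D a)) (T (i - k) m) := by
    intro i hi a m
    rcases Nat.eq_zero_or_pos i with rfl | hpos
    · simp [hT0, TensorProduct.tmul_smul]
    · exact hTi i hpos hi a m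
  have left_expand : ∀ i ≤ n - 1, ∀ (r : ℕ) (a : A) (m₁ : F) (z : RPow A F r),
      mul i r (T i (a • m₁)) z
        = a • mul i r (T i m₁) z
          + ∑ k ∈ Finset.Icc 1 i,
              algebraMap ℚ A (1 / (k : ℚ)) •
                mul i r ((mul (k - 1) (i - k) (T (k - 1) (D a)) (T (i - k) m₁)) i) z := by
    intro i hi r a m₁ z
    have h := congrArg (fun w : ∀ k, RPow A F k => mul i r (w i) z) (L1 i hi a m₁)
    simpa only [Pi.single_eq_same, Pi.add_apply, Finset.sum_apply, Pi.smul_apply,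
      map_add, map_sum, map_smul, LinearMap.add_apply, LinearMap.sum_apply,
      LinearMap.smul_apply] using h
  have right_expand : ∀ i ≤ n - 1, ∀ (p : ℕ) (x : RPow A F p) (a : A) (m₂ : F),
      mul p i x (T i (a • m₂))
        = a • mul p i x (T i m₂)
          + ∑ k ∈ Finset.Icc 1 i,
              algebraMap ℚ A (1 / (k : ℚ)) •
                mul p i x ((mul (k - 1) (i - k) (T (k - 1) (D a)) (T (i - k) m₂)) i) := by
    intro i hi p x a m₂
    have h := congrArg (fun w : ∀ k, RPow A F k => mul p i x (w i)) (L1 i hi a m₂)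
    simpa only [Pi.single_eq_same, Pi.add_apply, Finset.sum_apply, Pi.smul_apply,
      map_add, map_sum, map_smul] using h
  -- Part 1: well-definedness
  have key : ∀ j ≤ n - 1, ∀ (a : A) (m₁ m₂ : F),
      ∑ i ∈ Finset.range (j + 1), mul i (j - i) (T i (a • m₁)) (T (j - i) m₂)
        = ∑ i ∈ Finset.range (j + 1), mul i (j - i) (T i m₁) (T (j - i) (a • m₂)) := by
    intro j hj a m₁ m₂
    have lhs_eq :
        ∑ i ∈ Finset.range (j + 1), mul i (j - i) (T i (a • m₁)) (T (j - i) m₂)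
          = a • ∑ i ∈ Finset.range (j + 1), mul i (j - i) (T i m₁) (T (j - i) m₂)
            + ∑ i ∈ Finset.range (j + 1), ∑ k ∈ Finset.Icc 1 i,
                (fun (k p q : ℕ) => algebraMap ℚ A (1 / (k : ℚ)) •
                  mul p ((k - 1) + q + 1) (T p m₁)
                    ((mul (k - 1) q (T (k - 1) (D a)) (T q m₂)) ((k - 1) + q + 1)))
                  k (i - k) (j - i) := by
      rw [Finset.smul_sum, ← Finset.sum_add_distrib]
      refine Finset.sum_congr rfl fun i hi => ?_
      rw [Finset.mem_range] at hi
      rw [left_expand i (by omega) (j - i) a m₁ (T (j - i) m₂)]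
      congr 1
      refine Finset.sum_congr rfl fun k hk => ?_
      rw [Finset.mem_Icc] at hk
      congr 1
      exact mul_comm3 hmul (k - 1) (i - k) (j - i) i ((k - 1) + (j - i) + 1)
        (by omega) rfl _ _ _
    have rhs_eq :
        ∑ i ∈ Finset.range (j + 1), mul i (j - i) (T i m₁) (T (j - i) (a • m₂))
          = a • ∑ i ∈ Finset.range (j + 1), mul i (j - i) (T i m₁) (T (j - i) m₂)
            + ∑ i ∈ Finset.range (j + 1), ∑ k ∈ Finset.Icc 1 (j - i),
                (fun (k p q : ℕ) => algebraMap ℚ A (1 / (k : ℚ)) •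
                  mul p ((k - 1) + q + 1) (T p m₁)
                    ((mul (k - 1) q (T (k - 1) (D a)) (T q m₂)) ((k - 1) + q + 1)))
                  k i (j - i - k) := by
      rw [Finset.smul_sum, ← Finset.sum_add_distrib]
      refine Finset.sum_congr rfl fun i hi => ?_
      rw [Finset.mem_range] at hi
      rw [right_expand (j - i) (by omega) i (T i m₁) a m₂]
      congr 1
      refine Finset.sum_congr rfl fun k hk => ?_
      rw [Finset.mem_Icc] at hk
      congr 1
      exact mul_evalr (by omega) _ _
    rw [lhs_eq, rhs_eq]
    congr 1
    exact sum_tri₁ j fun (k p q : ℕ) => algebraMap ℚ A (1 / (k : ℚ)) •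
      mul p ((k - 1) + q + 1) (T p m₁)
        ((mul (k - 1) q (T (k - 1) (D a)) (T q m₂)) ((k - 1) + q + 1))
  refine ⟨key, ?_⟩
  have bal : ∀ j (hj : j ≤ n - 1) (a : A) (m₁ m₂ : F),
      PhiMap A F mul T j (a • m₁) m₂ = PhiMap A F mul T j m₁ (a • m₂) :=
    fun j hj a m₁ m₂ => key j hj a m₁ m₂
  have hsupp : ∀ j (hj : j ≤ n - 1) (ω : F ⊗[A] F),
        (Pi.single (j + 1)
            (TensorProduct.liftAddHom (PhiMap A F mul T j) (bal j hj) ω (j + 1)) :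
          ∀ k, RPow A F k)
          = TensorProduct.liftAddHom (PhiMap A F mul T j) (bal j hj) ω := by
      intro j hj ω
      have hmem : TensorProduct.liftAddHom (PhiMap A F mul T j) (bal j hj) ω
          ∈ LinearMap.range (LinearMap.single A (fun k => RPow A F k) (j + 1)) := by
        induction ω using TensorProduct.induction_on with
        | zero => rw [map_zero]; exact Submodule.zero_mem _
        | add x y hx hy => rw [map_add]; exact Submodule.add_mem _ hx hy
        | tmul m₁ m₂ =>
            rw [TensorProduct.liftAddHom_tmul, PhiMap_apply]
            refine Submodule.sum_mem _ fun i hi => ?_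
            rw [Finset.mem_range] at hi
            have h := mul_mem_single hmul i (j - i) (T i m₁) (T (j - i) m₂)
            rwa [show i + (j - i) + 1 = j + 1 by omega] at h
      obtain ⟨v, hv⟩ := hmem
      rw [← hv, LinearMap.coe_single, Pi.single_eq_same]
  -- the lifted maps
  refine ⟨fun j =>
    if hj : j ≤ n - 1 then
      (Pi.evalAddMonoidHom (fun k => RPow A F k) (j + 1)).comp
        (TensorProduct.liftAddHom (PhiMap A F mul T j) (bal j hj))
    else 0, ?_, ?_⟩
  case _ =>
    intro j hj m₁ m₂
    simp only [dif_pos hj, AddMonoidHom.comp_apply, Pi.evalAddMonoidHom_apply]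
    rw [hsupp j hj, TensorProduct.liftAddHom_tmul, PhiMap_apply]
  case _ =>
    -- the Leibniz rule for T'
    intro j hj a ω
    have hred : ∀ (i : ℕ) (hi : i ≤ n - 1) (ω : F ⊗[A] F),
        (if hj' : i ≤ n - 1 then
            (Pi.evalAddMonoidHom (fun k => RPow A F k) (i + 1)).comp
              (TensorProduct.liftAddHom (PhiMap A F mul T i) (bal i hj'))
          else 0) ω
          = TensorProduct.liftAddHom (PhiMap A F mul T i) (bal i hi) ω (i + 1) := by
      intro i hi ω; rw [dif_pos hi]; rfl
    induction ω using TensorProduct.induction_on with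
    | zero => simp
    | add x y hx hy =>
        simp only [smul_add, map_add, Pi.single_add, Finset.sum_add_distrib, hx, hy]
        abel
    | tmul m₁ m₂ =>
      rw [hred j hj, hred j hj, TensorProduct.smul_tmul', hsupp j hj, Pi.single_smul,
        hsupp j hj, TensorProduct.liftAddHom_tmul, TensorProduct.liftAddHom_tmul,
        PhiMap_apply, PhiMap_apply]
      have lhs3 :
          ∑ i ∈ Finset.range (j + 1), mul i (j - i) (T i (a • m₁)) (T (j - i) m₂)
            = a • ∑ i ∈ Finset.range (j + 1), mul i (j - i) (T i m₁) (T (j - i) m₂)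
              + ∑ i ∈ Finset.range (j + 1), ∑ k ∈ Finset.Icc 1 i,
                  (fun (k p q : ℕ) => algebraMap ℚ A (1 / (k : ℚ)) •
                    mul ((k - 1) + p + 1) q
                      ((mul (k - 1) p (T (k - 1) (D a)) (T p m₁)) ((k - 1) + p + 1))
                      (T q m₂))
                    k (i - k) (j - i) := by
        rw [Finset.smul_sum, ← Finset.sum_add_distrib]
        refine Finset.sum_congr rfl fun i hi => ?_
        rw [Finset.mem_range] at hi
        rw [left_expand i (by omega) (j - i) a m₁ (T (j - i) m₂)]
        congr 1
        refine Finset.sum_congr rfl fun k hk => ?_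
        rw [Finset.mem_Icc] at hk
        congr 1
        exact mul_evall (by omega) _ _
      rw [lhs3]
      congr 1
      have tri := sum_tri₂ j fun (k p q : ℕ) => algebraMap ℚ A (1 / (k : ℚ)) •
        mul ((k - 1) + p + 1) q
          ((mul (k - 1) p (T (k - 1) (D a)) (T p m₁)) ((k - 1) + p + 1)) (T q m₂)
      rw [tri]
      refine Finset.sum_congr rfl fun i hi => ?_
      rw [Finset.mem_range] at hi
      rw [hred i (by omega), TensorProduct.liftAddHom_tmul, PhiMap_apply,
        Finset.sum_apply, map_sum, Finset.smul_sum]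
      refine (Finset.sum_congr rfl fun p hp => ?_).symm
      rw [Finset.mem_range] at hp
      rw [show (1 : ℚ) / ((j : ℚ) - (i : ℚ)) = 1 / (((j - i : ℕ) : ℚ)) by
          rw [Nat.cast_sub (by omega)],
        show j - (i + 1) = (j - i) - 1 by omega]
      congr 1
      exact (mul_assoc3 hmul ((j - i) - 1) p (i - p) (((j - i) - 1) + p + 1) (i + 1)
        rfl (by omega) (T ((j - i) - 1) (D a)) (T p m₁) (T (i - p) m₂)).symm

end
end

section
/- (Uniqueness of the comparison automorphism.) Let D: A → F be a B-derivation such that ν∘D ≠ 0 for every nonzero A-linear map ν: F → Ŝ(F). Let h, h' be Hasse derivations of F extending D, and suppose φ, ψ are A-algebra endomorphisms of Ŝ(F) = Π_i S^i(F), each with graded degree-0 component equal to the identity and negative-degree components zero, such that h' = φ∘h = ψ∘h. Then φ = ψ. -/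
open scoped TensorProduct

noncomputable section

variable (A : Type) [CommRing A]
variable (F : Type) [AddCommGroup F] [Module A F]

/-- `Φ` is (the family of graded components of) an `A`-algebra endomorphism of the
completed symmetric algebra `Ŝ(F) = ∏ᵢ S^i(F)` whose degree-`0` component is the
identity (and whose negative-degree components vanish, there being none). -/
def IsEndoComp
    (mulS : ∀ p q, SymPow A F p →ₗ[A] SymPow A F q →ₗ[A] ∀ k, SymPow A F k)
    (Φ : ∀ q p, SymPow A F p →ₗ[A] SymPow A F (p + q)) : Prop :=
  (∀ p, Φ 0 p = LinearMap.id)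
  ∧ (∀ q, 0 < q → Φ q 0 = 0)
  ∧ (∀ (q p p' : ℕ) (m : Fin p → F) (m' : Fin p' → F),
      Pi.single (p + p' + q) (Φ q (p + p') (mkS A F (appendWord F m m')))
        = ∑ x ∈ Finset.HasAntidiagonal.antidiagonal q,
            mulS (p + x.1) (p' + x.2) (Φ x.1 p (mkS A F m)) (Φ x.2 p' (mkS A F m')))

/-- `Φ` carries the Hasse derivation `h` to `h'`: `h' = φ ∘ h`. -/
def Transports (Φ : ∀ q p, SymPow A F p →ₗ[A] SymPow A F (p + q))
    (h h' : ∀ i, A →+ SymPow A F i) : Prop :=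
  ∀ (a : A) (k : ℕ),
    Pi.single k (h' k a)
      = ∑ j ∈ Finset.range (k + 1), Pi.single (j + (k - j)) (Φ (k - j) j (h j a))

/-- `h` is a Hasse derivation of `F` extending `D`: a `B`-algebra homomorphism
`A → ∏ᵢ S^i(F)` with `h₀ = id_A` and `h₁ = D` (under `F ≅ S¹(F)`). -/
def IsHasse (B : Type) [CommRing B] [Algebra B A]
    (D : A → F)
    (mulS : ∀ p q, SymPow A F p →ₗ[A] SymPow A F q →ₗ[A] ∀ k, SymPow A F k)
    (h : ∀ i, A →+ SymPow A F i) : Prop :=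
  (∀ a : A, h 0 a = a • mkS A F (fun i : Fin 0 => i.elim0))
  ∧ (∀ (a b : A) (k : ℕ),
      Pi.single k (h k (a * b))
        = ∑ j ∈ Finset.range (k + 1), mulS j (k - j) (h j a) (h (k - j) b))
  ∧ (∀ (b : B) (k : ℕ), 1 ≤ k → h k (algebraMap B A b) = 0)
  ∧ (∀ a : A, h 1 a = mkS A F ![D a])


/-- The natural linear map `F →ₗ[A] S¹(F)`, `m ↦ mkS ![m]` (up to funext). -/
def iota1 : F →ₗ[A] SymPow A F 1 :=
  (symRel A F 1).mkQ ∘ₗ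
    ((PiTensorProduct.subsingletonEquiv (0 : Fin 1) :
        TPow A F 1 ≃ₗ[A] F).symm : F →ₗ[A] TPow A F 1)

lemma iota1_apply (m : F) : iota1 A F m = mkS A F (fun _ : Fin 1 => m) := by
  have : (PiTensorProduct.subsingletonEquiv (0 : Fin 1) :
      TPow A F 1 ≃ₗ[A] F).symm m = PiTensorProduct.tprod A (fun _ : Fin 1 => m) := by
    rw [LinearEquiv.symm_apply_eq, PiTensorProduct.subsingletonEquiv_apply_tprod]
  simp only [iota1, LinearMap.comp_apply, this]
  exact congrArg (symRel A F 1).mkQ this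

/-- `S^n(F)` is spanned by the classes of words. -/
lemma symPow_hom_ext {n : ℕ} {M : Type} [AddCommGroup M] [Module A M]
    {f g : SymPow A F n →ₗ[A] M}
    (H : ∀ m : Fin n → F, f (mkS A F m) = g (mkS A F m)) : f = g := by
  rw [← LinearMap.cancel_right (Submodule.mkQ_surjective (symRel A F n))]
  apply PiTensorProduct.ext
  apply MultilinearMap.ext
  intro m
  exact H m

/-- uniqueness of the comparison automorphism.  Suppose
`ν ∘ D ≠ 0` for every nonzero `A`-linear `ν : F → Ŝ(F)`.  If `h, h'` are Hasse
derivations extending `D` and `φ, ψ` are `A`-algebra endomorphisms of `Ŝ(F)` with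
degree-`0` components the identity such that `h' = φ ∘ h = ψ ∘ h`, then `φ = ψ`. -/
theorem comparison_unique
    (B : Type) [CommRing B] [Algebra B A] [Module B F] [IsScalarTower B A F]
    (D : Derivation B A F)
    (mulS : ∀ p q, SymPow A F p →ₗ[A] SymPow A F q →ₗ[A] ∀ k, SymPow A F k)
    (hmulS : IsMulS A F mulS)
    (hν : ∀ ν : ∀ i, F →ₗ[A] SymPow A F i,
      (∀ (i : ℕ) (a : A), ν i (D a) = 0) → ∀ i, ν i = 0)
    (h h' : ∀ i, A →+ SymPow A F i)
    (hh : IsHasse A F B (⇑D) mulS h)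
    (hh' : IsHasse A F B (⇑D) mulS h')
    (Φ Ψ : ∀ q p, SymPow A F p →ₗ[A] SymPow A F (p + q))
    (hΦ : IsEndoComp A F mulS Φ) (hΨ : IsEndoComp A F mulS Ψ)
    (hΦt : Transports A F Φ h h') (hΨt : Transports A F Ψ h h') :
    Φ = Ψ := by
  have main : ∀ q, (∀ q' : ℕ, q' < q → ∀ p, Φ q' p = Ψ q' p) → ∀ p, Φ q p = Ψ q p := by
    intro q IH
    rcases Nat.eq_zero_or_pos q with hq0 | hq
    · intro p; subst hq0; rw [hΦ.1 p, hΨ.1 p]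
    -- Step A : Φ q 1 = Ψ q 1
    have hDa : ∀ a : A, Φ q 1 (h 1 a) = Ψ q 1 (h 1 a) := by
      intro a
      have hsum :
          ∑ j ∈ Finset.range (q + 1 + 1),
              Pi.single (j + (q + 1 - j)) (Φ (q + 1 - j) j (h j a))
            = ∑ j ∈ Finset.range (q + 1 + 1),
              Pi.single (j + (q + 1 - j)) (Ψ (q + 1 - j) j (h j a)) :=
        (hΦt a (q + 1)).symm.trans (hΨt a (q + 1))
      have hne : ∀ j ∈ Finset.range (q + 1 + 1), j ≠ 1 →
          (Pi.single (j + (q + 1 - j)) (Φ (q + 1 - j) j (h j a)) :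
            ∀ k, SymPow A F k)
            = Pi.single (j + (q + 1 - j)) (Ψ (q + 1 - j) j (h j a)) := by
        intro j hj hj1
        rcases Nat.eq_zero_or_pos j with rfl | hjpos
        · have e1 : Φ (q + 1 - 0) 0 = 0 := hΦ.2.1 (q + 1) (by omega)
          have e2 : Ψ (q + 1 - 0) 0 = 0 := hΨ.2.1 (q + 1) (by omega)
          rw [e1, e2]
        · have hj2 : 2 ≤ j := by omega
          have : q + 1 - j < q := by
            simp only [Finset.mem_range] at hj; omega
          rw [IH _ this]
      have hmem : (1 : ℕ) ∈ Finset.range (q + 1 + 1) := by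
        simp only [Finset.mem_range]; omega
      have e1 := Finset.add_sum_erase (Finset.range (q + 1 + 1))
        (fun j => (Pi.single (j + (q + 1 - j)) (Φ (q + 1 - j) j (h j a)) :
          ∀ k, SymPow A F k)) hmem
      have e2 := Finset.add_sum_erase (Finset.range (q + 1 + 1))
        (fun j => (Pi.single (j + (q + 1 - j)) (Ψ (q + 1 - j) j (h j a)) :
          ∀ k, SymPow A F k)) hmem
      have erest :
          ∑ j ∈ (Finset.range (q + 1 + 1)).erase 1,
              (Pi.single (j + (q + 1 - j)) (Φ (q + 1 - j) j (h j a)) :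
                ∀ k, SymPow A F k)
            = ∑ j ∈ (Finset.range (q + 1 + 1)).erase 1,
              Pi.single (j + (q + 1 - j)) (Ψ (q + 1 - j) j (h j a)) := by
        refine Finset.sum_congr rfl fun j hj => ?_
        exact hne j (Finset.mem_of_mem_erase hj) (Finset.ne_of_mem_erase hj)
      have hkey :
          (Pi.single (1 + (q + 1 - 1)) (Φ (q + 1 - 1) 1 (h 1 a)) :
            ∀ k, SymPow A F k)
            = Pi.single (1 + (q + 1 - 1)) (Ψ (q + 1 - 1) 1 (h 1 a)) := by
        have := e1.trans (hsum.trans e2.symm)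
        rw [erest] at this
        exact add_right_cancel this
      have := congrFun hkey (1 + (q + 1 - 1))
      simp only [Pi.single_eq_same] at this
      rw [Nat.add_sub_cancel] at this
      exact this
    have stepA : Φ q 1 = Ψ q 1 := by
      have hDa' : ∀ a : A, Φ q 1 (iota1 A F (D a)) = Ψ q 1 (iota1 A F (D a)) := by
        intro a
        have h1 : iota1 A F (D a) = h 1 a := by
          rw [iota1_apply, hh.2.2.2 a]
          congr 1
          funext i
          have : i = 0 := Subsingleton.elim _ _
          subst this
          rfl
        rw [h1]; exact hDa a
      have hν0 : ∀ (i : ℕ) (a : A),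
          (Pi.single (1 + q) ((Φ q 1 - Ψ q 1) ∘ₗ iota1 A F) :
            ∀ i, F →ₗ[A] SymPow A F i) i (D a) = 0 := by
        intro i a
        by_cases hi : i = 1 + q
        · subst hi
          rw [Pi.single_eq_same]
          simp only [LinearMap.comp_apply, LinearMap.sub_apply]
          rw [hDa' a, sub_self]
        · rw [Pi.single_eq_of_ne hi]
          rfl
      have hz := hν _ hν0 (1 + q)
      rw [Pi.single_eq_same] at hz
      apply symPow_hom_ext A F
      intro m
      have hm : mkS A F m = iota1 A F (m 0) := by
        rw [iota1_apply]
        congr 1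
        funext i
        have : i = 0 := Subsingleton.elim _ _
        subst this; rfl
      have := LinearMap.ext_iff.mp hz (m 0)
      simp only [LinearMap.comp_apply, LinearMap.sub_apply, LinearMap.zero_apply] at this
      rw [hm]
      exact sub_eq_zero.mp this
    -- Step B : induction on the length p
    intro p
    induction p with
    | zero => rw [hΦ.2.1 q hq, hΨ.2.1 q hq]
    | succ p ihp =>
      rcases Nat.eq_zero_or_pos p with rfl | hp
      · exact stepA
      apply symPow_hom_ext A F
      intro m
      have hm : appendWord F (fun i : Fin p => m i.castSucc)
          (fun _ : Fin 1 => m (Fin.last p)) = m := by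
        funext j
        simp only [appendWord]
        split_ifs with hlt
        · exact congrArg m (Fin.ext rfl)
        · exact congrArg m (Fin.ext (by simp [Fin.val_last]; omega))
      have EΦ := hΦ.2.2 q p 1 (fun i : Fin p => m i.castSucc)
        (fun _ : Fin 1 => m (Fin.last p))
      have EΨ := hΨ.2.2 q p 1 (fun i : Fin p => m i.castSucc)
        (fun _ : Fin 1 => m (Fin.last p))
      rw [hm] at EΦ EΨ
      have ERHS :
          ∑ x ∈ Finset.HasAntidiagonal.antidiagonal q,
              mulS (p + x.1) (1 + x.2)
                (Φ x.1 p (mkS A F (fun i : Fin p => m i.castSucc)))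
                (Φ x.2 1 (mkS A F (fun _ : Fin 1 => m (Fin.last p))))
            = ∑ x ∈ Finset.HasAntidiagonal.antidiagonal q,
              mulS (p + x.1) (1 + x.2)
                (Ψ x.1 p (mkS A F (fun i : Fin p => m i.castSucc)))
                (Ψ x.2 1 (mkS A F (fun _ : Fin 1 => m (Fin.last p)))) := by
        refine Finset.sum_congr rfl fun x hx => ?_
        have hxq := Finset.HasAntidiagonal.mem_antidiagonal.mp hx
        have ex1 : Φ x.1 p = Ψ x.1 p := by
          rcases Nat.lt_or_ge x.1 q with hlt | hge
          · exact IH _ hlt p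
          · rw [show x.1 = q by omega]; exact ihp
        have ex2 : Φ x.2 1 = Ψ x.2 1 := by
          rcases Nat.lt_or_ge x.2 q with hlt | hge
          · exact IH _ hlt 1
          · rw [show x.2 = q by omega]; exact stepA
        rw [ex1, ex2]
      have := EΦ.trans (ERHS.trans EΨ.symm)
      have := congrFun this (p + 1 + q)
      simpa only [Pi.single_eq_same] using this
  funext q
  exact funext (fun p => Nat.strong_induction_on q main p)
  

end
end

section
/- If A is a Noetherian commutative Q-algebra, F a finitely generated projective (locally free) A-module, and D: A → F a derivation such that the submodule generated by D(A) equals F after localization at every associated prime of A, then ν∘D ≠ 0 for every nonzero A-linear map ν: F → Ŝ(F) = Π_{i≥0} S^i(F). -/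
open scoped TensorProduct

noncomputable section

variable (A : Type) [CommRing A]
variable (F : Type) [AddCommGroup F] [Module A F]

/-! ### Auxiliary machinery for Statement 19 -/

/-- The action of a permutation on the tensor power. -/
def permMap (n : ℕ) (e : Equiv.Perm (Fin n)) : TPow A F n →ₗ[A] TPow A F n :=
  (PiTensorProduct.reindex A (fun _ : Fin n => F) e).toLinearMap

lemma permMap_tprod (n : ℕ) (e : Equiv.Perm (Fin n)) (m : Fin n → F) :
    permMap A F n e (PiTensorProduct.tprod A m)
      = PiTensorProduct.tprod A (fun i => m (e.symm i)) :=
  PiTensorProduct.reindex_tprod e m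

/-- The symmetrization (averaging) operator on the tensor power. -/
def avg [Algebra ℚ A] (n : ℕ) : TPow A F n →ₗ[A] TPow A F n :=
  algebraMap ℚ A (1 / (n.factorial : ℚ)) • ∑ e : Equiv.Perm (Fin n), permMap A F n e

lemma avg_tprod [Algebra ℚ A] (n : ℕ) (m : Fin n → F) :
    avg A F n (PiTensorProduct.tprod A m)
      = algebraMap ℚ A (1 / (n.factorial : ℚ)) •
          ∑ e : Equiv.Perm (Fin n), PiTensorProduct.tprod A (fun i => m (e.symm i)) := by
  simp [avg, LinearMap.sum_apply, permMap_tprod]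

lemma sum_perm_comp [Algebra ℚ A] (n : ℕ) (m : Fin n → F) (e : Equiv.Perm (Fin n)) :
    ∑ e' : Equiv.Perm (Fin n), PiTensorProduct.tprod A (fun i => m (e (e'.symm i)))
      = ∑ e' : Equiv.Perm (Fin n), PiTensorProduct.tprod A (fun i => m (e'.symm i)) := by
  refine Fintype.sum_equiv (Equiv.mulRight e⁻¹) _ _ ?_
  intro x
  have hfun : ∀ i, m (e (x.symm i)) = m ((Equiv.mulRight e⁻¹ x).symm i) := by
    intro i
    have : ((x * e⁻¹).symm : Equiv.Perm (Fin n)) i = e (x.symm i) := by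
      rw [← Equiv.Perm.inv_def, mul_inv_rev, inv_inv, Equiv.Perm.mul_apply, Equiv.Perm.inv_def]
    have h2 : (Equiv.mulRight e⁻¹ x) = x * e⁻¹ := rfl
    rw [h2, this]
  exact congrArg (PiTensorProduct.tprod A) (funext hfun)

lemma symRel_le_ker_avg [Algebra ℚ A] (n : ℕ) :
    symRel A F n ≤ LinearMap.ker (avg A F n) := by
  rw [symRel, Submodule.span_le]
  rintro x ⟨m, e, rfl⟩
  simp only [SetLike.mem_coe, LinearMap.mem_ker, map_sub]
  rw [avg_tprod, avg_tprod]
  have : ∑ e' : Equiv.Perm (Fin n), PiTensorProduct.tprod A (fun i => (m ∘ e) (e'.symm i))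
      = ∑ e' : Equiv.Perm (Fin n), PiTensorProduct.tprod A (fun i => m (e'.symm i)) :=
    sum_perm_comp A F n m e
  rw [this, sub_self]

lemma inv_fact_smul_card_smul [Algebra ℚ A] (n : ℕ) (z : TPow A F n) :
    algebraMap ℚ A (1 / (n.factorial : ℚ)) • ((n.factorial : A) • z) = z := by
  rw [smul_smul, ← map_natCast (algebraMap ℚ A) n.factorial, ← map_mul]
  rw [one_div, inv_mul_cancel₀ (by exact_mod_cast n.factorial_ne_zero)]
  simp

lemma avg_sub_mem [Algebra ℚ A] (n : ℕ) (t : TPow A F n) :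
    avg A F n t - t ∈ symRel A F n := by
  have key : (⊤ : Submodule A (TPow A F n)) ≤
      Submodule.comap (avg A F n - LinearMap.id) (symRel A F n) := by
    rw [← PiTensorProduct.span_tprod_eq_top, Submodule.span_le]
    rintro x ⟨m, rfl⟩
    simp only [SetLike.mem_coe, Submodule.mem_comap, LinearMap.sub_apply, LinearMap.id_apply]
    rw [avg_tprod]
    have hconst : PiTensorProduct.tprod A m
        = algebraMap ℚ A (1 / (n.factorial : ℚ)) •
            ∑ _e : Equiv.Perm (Fin n), PiTensorProduct.tprod A m := by
      rw [Finset.sum_const, Finset.card_univ, Fintype.card_perm, Fintype.card_fin,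
        ← Nat.cast_smul_eq_nsmul A, inv_fact_smul_card_smul]
    rw [hconst]
    rw [← smul_sub, ← Finset.sum_sub_distrib]
    refine Submodule.smul_mem _ _ (Submodule.sum_mem _ ?_)
    intro e _
    have : PiTensorProduct.tprod A (fun i => m (e.symm i)) - PiTensorProduct.tprod A m
        = -(PiTensorProduct.tprod A m - PiTensorProduct.tprod A (m ∘ e.symm)) :=
      (neg_sub _ _).symm
    rw [this]
    exact neg_mem (Submodule.subset_span ⟨m, e.symm, rfl⟩)
  simpa using key (Submodule.mem_top (x := t))

/-- The canonical section `S^n(F) → T^n(F)` of the quotient, given by symmetrization. -/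
def secS [Algebra ℚ A] (n : ℕ) : SymPow A F n →ₗ[A] TPow A F n :=
  Submodule.liftQ _ (avg A F n) (symRel_le_ker_avg A F n)

lemma mkQ_secS [Algebra ℚ A] (n : ℕ) (y : SymPow A F n) :
    Submodule.Quotient.mk (secS A F n y) = y := by
  obtain ⟨t, rfl⟩ := Submodule.Quotient.mk_surjective (symRel A F n) y
  show Submodule.Quotient.mk (avg A F n t) = _
  rw [Submodule.Quotient.eq]
  exact avg_sub_mem A F n t

/-- The tensor power of a projective module is a split submodule of a free module. -/
lemma tpow_split [Module.Projective A F] (n : ℕ) :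
    ∃ (M : Type) (_ : AddCommGroup M) (_ : Module A M) (_ : Module.Free A M)
      (f : TPow A F n →ₗ[A] M) (g : M →ₗ[A] TPow A F n),
      ∀ t, g (f t) = t := by
  induction n with
  | zero =>
      exact ⟨A, inferInstance, inferInstance, inferInstance,
        (PiTensorProduct.isEmptyEquiv (Fin 0)).toLinearMap,
        (PiTensorProduct.isEmptyEquiv (Fin 0)).symm.toLinearMap,
        fun t => LinearEquiv.symm_apply_apply _ t⟩
  | succ n ih =>
      obtain ⟨M, _, _, _, f, g, hfg⟩ := ih
      obtain ⟨sF, hsF⟩ := Module.projective_def.mp ‹Module.Projective A F›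
      let E : TPow A F (n + 1) ≃ₗ[A] TPow A F n ⊗[A] F :=
        (PiTensorProduct.reindex A (fun _ : Fin (n + 1) => F) finSumFinEquiv.symm).trans
          ((PiTensorProduct.tmulEquiv A F).symm.trans
            (TensorProduct.congr (LinearEquiv.refl A (TPow A F n))
              (PiTensorProduct.subsingletonEquiv (0 : Fin 1))))
      refine ⟨M ⊗[A] (F →₀ A), inferInstance, inferInstance, inferInstance,
        (TensorProduct.map f sF).comp E.toLinearMap,
        E.symm.toLinearMap.comp (TensorProduct.map g (Finsupp.linearCombination A id)), ?_⟩
      intro t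
      have h2 : (TensorProduct.map g (Finsupp.linearCombination A id)).comp
          (TensorProduct.map f sF) = LinearMap.id := by
        rw [← TensorProduct.map_comp]
        have hg : g.comp f = LinearMap.id := LinearMap.ext hfg
        have hs : (Finsupp.linearCombination A id).comp sF = LinearMap.id :=
          LinearMap.ext hsF
        rw [hg, hs, TensorProduct.map_id]
      have : TensorProduct.map g (Finsupp.linearCombination A id)
          ((TensorProduct.map f sF) (E t)) = E t := DFunLike.congr_fun h2 (E t)
      simp only [LinearMap.comp_apply, LinearEquiv.coe_coe, this, LinearEquiv.symm_apply_apply]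

/-- Over a Noetherian ring, an element of the tensor power of a projective module
which is locally killed at every associated prime is zero. -/
lemma tpow_eq_zero [IsNoetherianRing A] [Module.Projective A F] {n : ℕ} (t : TPow A F n)
    (h : ∀ P ∈ associatedPrimes A A, ∃ s ∉ P, s • t = 0) : t = 0 := by
  obtain ⟨M, _, _, _, f, g, hfg⟩ := tpow_split A F n
  by_contra ht
  have hft : f t ≠ 0 := fun h0 => ht (by rw [← hfg t, h0, map_zero])
  set b := Module.Free.chooseBasis A M with hb
  have hrepr : b.repr (f t) ≠ 0 := fun h0 => hft (by
    have := congrArg b.repr.symm h0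
    simpa using this)
  obtain ⟨k, hk⟩ := Finsupp.ne_iff.mp hrepr
  obtain ⟨P, hP, hle⟩ := exists_le_isAssociatedPrime_of_isNoetherianRing A
    (b.repr (f t) k) (by simpa using hk)
  obtain ⟨s, hs, hst⟩ := h P hP
  refine hs (hle ?_)
  rw [Submodule.mem_colon_singleton]
  have h1 : b.repr (f (s • t)) k = 0 := by rw [hst]; simp
  rw [map_smul, map_smul] at h1
  simpa using h1

/-- If `A` is Noetherian, `F` finitely generated projective, and the
submodule generated by `D(A)` equals `F` after localization at every associated prime
of `A`, then `ν ∘ D ≠ 0` for every nonzero `A`-linear `ν : F → Ŝ(F) = ∏ᵢ S^i(F)`. -/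
theorem nondegenerate_of_generating [Algebra ℚ A] [IsNoetherianRing A]
    [Module.Finite A F] [Module.Projective A F]
    [Module ℚ F] [IsScalarTower ℚ A F]
    (D : Derivation ℚ A F)
    (hgen : ∀ p ∈ associatedPrimes A A, ∀ x : F,
      ∃ s : A, s ∉ p ∧ s • x ∈ Submodule.span A (Set.range (⇑D))) :
    ∀ ν : ∀ i, F →ₗ[A] SymPow A F i,
      (∀ (i : ℕ) (a : A), ν i (D a) = 0) → ∀ i, ν i = 0 := by
  intro ν hν i
  apply LinearMap.ext
  intro x
  rw [LinearMap.zero_apply]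
  have hker : Submodule.span A (Set.range ⇑D) ≤ LinearMap.ker (ν i) := by
    rw [Submodule.span_le]
    rintro _ ⟨a, rfl⟩
    exact hν i a
  have ht : secS A F i (ν i x) = 0 := by
    apply tpow_eq_zero
    intro P hP
    obtain ⟨s, hs, hsx⟩ := hgen P hP x
    refine ⟨s, hs, ?_⟩
    have h0 : ν i (s • x) = 0 := hker hsx
    calc s • secS A F i (ν i x) = secS A F i (ν i (s • x)) := by rw [map_smul, map_smul]
      _ = 0 := by rw [h0, map_zero]
  have hmk := mkQ_secS A F i (ν i x)
  rw [ht] at hmk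
  simpa using hmk.symm

end
end
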